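/- Let λ₁, …, λ_μ be vectors in the closed positive cone C̄⁺ of a real quadratic space of signature (1, p−1), linearly independent, with μ ≥ 2. Then for all r₁, …, r_μ ∈ (0, R] with 0 < R < 1, there is a constant c > 0 (independent of the rᵢ) with Q(λ₁ log r₁ + ⋯ + λ_μ log r_μ) ≥ c |log r₁| (|log r₂| ⋯ |log r_μ|)^{1/(μ−1)}. -/

import Mathlib

open Finset

open scoped RealInnerProductSpace

section Aux

/-- The bilinear form `2 x₀ y₀ - ⟪x, y⟫` on Euclidean space. -/
noncomputable def myB (p : ℕ) [NeZero p] :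
    EuclideanSpace ℝ (Fin p) →ₗ[ℝ] EuclideanSpace ℝ (Fin p) →ₗ[ℝ] ℝ :=
  LinearMap.mk₂ ℝ (fun x y => 2 * (x 0 * y 0) - ⟪x, y⟫)
    (fun x x' y => by simp only [PiLp.add_apply, inner_add_left]; ring)
    (fun c x y => by simp only [PiLp.smul_apply, real_inner_smul_left, smul_eq_mul]; ring)
    (fun x y y' => by simp only [PiLp.add_apply, inner_add_right]; ring)
    (fun c x y => by simp only [PiLp.smul_apply, real_inner_smul_right, smul_eq_mul]; ring)

lemma myB_apply {p : ℕ} [NeZero p] (x y : EuclideanSpace ℝ (Fin p)) :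
    myB p x y = 2 * (x 0 * y 0) - ⟪x, y⟫ := rfl

lemma myB_comm {p : ℕ} [NeZero p] (x y : EuclideanSpace ℝ (Fin p)) :
    myB p x y = myB p y x := by
  rw [myB_apply, myB_apply, real_inner_comm]; ring

lemma myB_self {p : ℕ} [NeZero p] (x : EuclideanSpace ℝ (Fin p)) :
    myB p x x = 2 * (x 0) ^ 2 - ‖x‖ ^ 2 := by
  rw [myB_apply, real_inner_self_eq_norm_sq]; ring

lemma myB_pos_iff {p : ℕ} [NeZero p] (y : EuclideanSpace ℝ (Fin p)) :
    0 < myB p y y ↔ ‖y‖ < Real.sqrt 2 * |y 0| := by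
  rw [myB_self]
  constructor
  · intro h
    apply lt_of_pow_lt_pow_left₀ 2 (by positivity)
    rw [mul_pow, Real.sq_sqrt (by norm_num : (0:ℝ) ≤ 2), sq_abs]
    linarith
  · intro h
    have h2 : ‖y‖ ^ 2 < (Real.sqrt 2 * |y 0|) ^ 2 :=
      pow_lt_pow_left₀ h (norm_nonneg y) two_ne_zero
    rw [mul_pow, Real.sq_sqrt (by norm_num : (0:ℝ) ≤ 2), sq_abs] at h2
    linarith

lemma cone_closure {p : ℕ} [NeZero p] (ε : ℝ) (hε : ε = 1 ∨ ε = -1)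
    (w₀ : EuclideanSpace ℝ (Fin p)) (hw : ‖w₀‖ < Real.sqrt 2 * (ε * w₀ 0))
    {x : EuclideanSpace ℝ (Fin p)}
    (hx : x ∈ closure (connectedComponentIn
      {y : EuclideanSpace ℝ (Fin p) | 0 < myB p y y} w₀)) :
    ‖x‖ ≤ Real.sqrt 2 * (ε * x 0) := by
  have hc0 : Continuous fun y : EuclideanSpace ℝ (Fin p) => y 0 :=
    (EuclideanSpace.proj (0 : Fin p)).continuous
  have hcont : Continuous fun y : EuclideanSpace ℝ (Fin p) => Real.sqrt 2 * (ε * y 0) :=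
    continuous_const.mul (continuous_const.mul hc0)
  have hcont' : Continuous fun y : EuclideanSpace ℝ (Fin p) => Real.sqrt 2 * (-(ε * y 0)) :=
    continuous_const.mul (continuous_const.mul hc0).neg
  set C : Set (EuclideanSpace ℝ (Fin p)) := {y | ‖y‖ < Real.sqrt 2 * (ε * y 0)} with hC
  set C' : Set (EuclideanSpace ℝ (Fin p)) := {y | ‖y‖ < Real.sqrt 2 * (-(ε * y 0))} with hC'
  have hCopen : IsOpen C := isOpen_lt continuous_norm hcont
  have hC'open : IsOpen C' := isOpen_lt continuous_norm hcont'
  have hdisj : Disjoint C C' := by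
    rw [Set.disjoint_left]
    intro y h1 h2
    simp only [hC, hC', Set.mem_setOf_eq] at h1 h2
    have h3 := norm_nonneg y
    linarith
  have hsub : {y : EuclideanSpace ℝ (Fin p) | 0 < myB p y y} ⊆ C ∪ C' := by
    intro y hy
    have hy' : ‖y‖ < Real.sqrt 2 * |y 0| := (myB_pos_iff y).mp hy
    rcases abs_choice (y 0) with h | h <;> rcases hε with rfl | rfl
    · left
      show ‖y‖ < Real.sqrt 2 * (1 * y 0)
      rw [one_mul, ← h]; exact hy'
    · right
      show ‖y‖ < Real.sqrt 2 * (-(-1 * y 0))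
      rw [neg_mul, one_mul, neg_neg, ← h]; exact hy'
    · right
      show ‖y‖ < Real.sqrt 2 * (-(1 * y 0))
      rw [one_mul, ← h]; exact hy'
    · left
      show ‖y‖ < Real.sqrt 2 * (-1 * y 0)
      rw [neg_mul, one_mul, ← h]; exact hy'
  have hCS : C ⊆ {y : EuclideanSpace ℝ (Fin p) | 0 < myB p y y} := by
    intro y hy
    have hy' : ‖y‖ < Real.sqrt 2 * (ε * y 0) := hy
    have h1 : ε * y 0 ≤ |y 0| := by
      rcases hε with rfl | rfl
      · rw [one_mul]; exact le_abs_self _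
      · rw [neg_one_mul]; exact neg_le_abs _
    rw [Set.mem_setOf_eq, myB_pos_iff]
    calc ‖y‖ < Real.sqrt 2 * (ε * y 0) := hy'
      _ ≤ Real.sqrt 2 * |y 0| := mul_le_mul_of_nonneg_left h1 (Real.sqrt_nonneg 2)
  have hw₀C : w₀ ∈ C := hw
  have hw₀S : w₀ ∈ {y : EuclideanSpace ℝ (Fin p) | 0 < myB p y y} := hCS hw₀C
  have hcomp : connectedComponentIn {y : EuclideanSpace ℝ (Fin p) | 0 < myB p y y} w₀ ⊆ C :=
    isPreconnected_connectedComponentIn.subset_left_of_subset_union hCopen hC'open hdisj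
      ((connectedComponentIn_subset _ _).trans hsub)
      ⟨w₀, mem_connectedComponentIn hw₀S, hw₀C⟩
  have hKclosed : IsClosed {y : EuclideanSpace ℝ (Fin p) | ‖y‖ ≤ Real.sqrt 2 * (ε * y 0)} :=
    isClosed_le continuous_norm hcont
  have hsub2 : connectedComponentIn {y : EuclideanSpace ℝ (Fin p) | 0 < myB p y y} w₀ ⊆
      {y : EuclideanSpace ℝ (Fin p) | ‖y‖ ≤ Real.sqrt 2 * (ε * y 0)} := by
    intro y hy
    have h1 : y ∈ C := hcomp hy
    rw [hC, Set.mem_setOf_eq] at h1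
    exact h1.le
  exact closure_minimal hsub2 hKclosed hx

lemma pair_ineq {p : ℕ} [NeZero p] (ε : ℝ) (hε : ε = 1 ∨ ε = -1)
    {x y : EuclideanSpace ℝ (Fin p)}
    (hx : ‖x‖ ≤ Real.sqrt 2 * (ε * x 0)) (hy : ‖y‖ ≤ Real.sqrt 2 * (ε * y 0)) :
    ⟪x, y⟫ ≤ ‖x‖ * ‖y‖ ∧ ‖x‖ * ‖y‖ ≤ 2 * (x 0 * y 0) := by
  refine ⟨real_inner_le_norm x y, ?_⟩
  have h22 : Real.sqrt 2 * Real.sqrt 2 = 2 := Real.mul_self_sqrt (by norm_num)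
  have hε2 : ε * ε = 1 := by rcases hε with rfl | rfl <;> norm_num
  calc ‖x‖ * ‖y‖ ≤ (Real.sqrt 2 * (ε * x 0)) * (Real.sqrt 2 * (ε * y 0)) :=
        mul_le_mul hx hy (norm_nonneg y) ((norm_nonneg x).trans hx)
    _ = (Real.sqrt 2 * Real.sqrt 2) * ((ε * ε) * (x 0 * y 0)) := by ring
    _ = 2 * (x 0 * y 0) := by rw [h22, hε2, one_mul]

lemma myB_nonneg {p : ℕ} [NeZero p] (ε : ℝ) (hε : ε = 1 ∨ ε = -1)
    {x y : EuclideanSpace ℝ (Fin p)}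
    (hx : ‖x‖ ≤ Real.sqrt 2 * (ε * x 0)) (hy : ‖y‖ ≤ Real.sqrt 2 * (ε * y 0)) :
    0 ≤ myB p x y := by
  obtain ⟨h1, h2⟩ := pair_ineq ε hε hx hy
  rw [myB_apply]; linarith

lemma myB_pos {p : ℕ} [NeZero p] (ε : ℝ) (hε : ε = 1 ∨ ε = -1)
    {x y : EuclideanSpace ℝ (Fin p)}
    (hx : ‖x‖ ≤ Real.sqrt 2 * (ε * x 0)) (hy : ‖y‖ ≤ Real.sqrt 2 * (ε * y 0))
    (hind : ∀ a b : ℝ, a • x + b • y = 0 → a = 0 ∧ b = 0) :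
    0 < myB p x y := by
  obtain ⟨h1, h2⟩ := pair_ineq ε hε hx hy
  have hy0 : y ≠ 0 := by
    intro h
    have h' := (hind 0 1 (by simp [h])).2
    norm_num at h'
  rcases lt_or_ge 0 (myB p x y) with h | h
  · exact h
  exfalso
  rw [myB_apply] at h
  have heq : ⟪x, y⟫ = ‖x‖ * ‖y‖ := le_antisymm h1 (by linarith)
  have hsm : ‖y‖ • x = ‖x‖ • y := inner_eq_norm_mul_iff_real.mp heq
  have h0 : ‖y‖ • x + (-‖x‖) • y = 0 := by
    rw [neg_smul, hsm]
    abel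
  have hz := (hind _ _ h0).1
  exact hy0 (norm_eq_zero.mp hz)

lemma qstd_eq {p : ℕ} [NeZero p] (y : Fin p → ℝ) :
    QuadraticMap.weightedSumSquares ℝ (fun i : Fin p => if (i : ℕ) = 0 then (1 : ℝ) else -1) y
      = myB p ((WithLp.equiv 2 (Fin p → ℝ)).symm y) ((WithLp.equiv 2 (Fin p → ℝ)).symm y) := by
  rw [QuadraticMap.weightedSumSquares_apply, myB_apply]
  have hcoord : ∀ i, ((WithLp.equiv 2 (Fin p → ℝ)).symm y) i = y i := fun _ => rfl
  have hinner : ⟪((WithLp.equiv 2 (Fin p → ℝ)).symm y), ((WithLp.equiv 2 (Fin p → ℝ)).symm y)⟫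
      = ∑ i, y i * y i := by
    rw [PiLp.inner_apply]
    simp only [RCLike.inner_apply, starRingEnd_apply, star_trivial, hcoord]
  rw [hinner]
  simp only [hcoord]
  have hterm : ∀ i : Fin p, (if (i : ℕ) = 0 then (1:ℝ) else -1) • (y i * y i)
      = 2 * (if i = (0 : Fin p) then y i * y i else 0) - y i * y i := by
    intro i
    by_cases h : i = 0
    · subst h
      simp only [Fin.val_zero, if_true, if_pos rfl]
      norm_num
      ring
    · have h' : ¬ ((i : ℕ) = 0) := fun hc => h (Fin.ext (by simpa using hc))
      simp [h, h']
  rw [Finset.sum_congr rfl fun i _ => hterm i, Finset.sum_sub_distrib, ← Finset.mul_sum,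
    Finset.sum_ite_eq' Finset.univ (0 : Fin p)]
  simp

end Aux

/-- Let `λ₀, …, λ_{μ-1}` (with `μ = m + 2 ≥ 2`) be linearly independent
vectors in the closure of one component `C⁺` of the positive cone of a real quadratic space
of signature `(1, p-1)`, and let `0 < R < 1`.  Then there is `c > 0` (independent of the
`rᵢ`) such that for all `r₀, …, r_{μ-1} ∈ (0, R]`,
`Q (λ₀ log r₀ + ⋯ + λ_{μ-1} log r_{μ-1}) ≥ c |log r₀| (|log r₁| ⋯ |log r_{μ-1}|)^{1/(μ-1)}`. -/
theorem stmt17 {p m : ℕ} (hp : 1 ≤ p) {V : Type*} [NormedAddCommGroup V] [NormedSpace ℝ V]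
    [FiniteDimensional ℝ V] (Q : QuadraticForm ℝ V)
    (hsig : Q.Equivalent (QuadraticMap.weightedSumSquares ℝ
      (fun i : Fin p => if (i : ℕ) = 0 then (1 : ℝ) else -1)))
    (v₀ : V) (hv₀ : 0 < Q v₀)
    (lam : Fin (m + 2) → V)
    (hlam : ∀ i, lam i ∈ closure (connectedComponentIn {v : V | 0 < Q v} v₀))
    (hindep : LinearIndependent ℝ lam)
    (R : ℝ) (hR0 : 0 < R) (hR1 : R < 1) :
    ∃ c : ℝ, 0 < c ∧ ∀ r : Fin (m + 2) → ℝ, (∀ i, r i ∈ Set.Ioc 0 R) →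
      c * |Real.log (r 0)| *
        (∏ i ∈ univ.erase 0, |Real.log (r i)|) ^ (1 / (m + 1 : ℝ))
        ≤ Q (∑ i, Real.log (r i) • lam i) := by
  classical
  haveI : NeZero p := ⟨by omega⟩
  obtain ⟨φ⟩ := hsig
  set ψ : (Fin p → ℝ) ≃ₗ[ℝ] EuclideanSpace ℝ (Fin p) :=
    (WithLp.linearEquiv 2 ℝ (Fin p → ℝ)).symm with hψ
  set e : V ≃ₗ[ℝ] EuclideanSpace ℝ (Fin p) := φ.toLinearEquiv.trans ψ with he
  have hQ : ∀ v, Q v = myB p (e v) (e v) := by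
    intro v
    rw [← φ.map_app v, qstd_eq]
    rfl
  set h : V ≃ₜ EuclideanSpace ℝ (Fin p) := e.toContinuousLinearEquiv.toHomeomorph with hh
  have hhe : ∀ v, h v = e v := fun _ => rfl
  have hSimg : h '' {v : V | 0 < Q v} = {x : EuclideanSpace ℝ (Fin p) | 0 < myB p x x} := by
    ext x
    constructor
    · rintro ⟨v, hv, rfl⟩
      rw [Set.mem_setOf_eq, hhe, ← hQ v]
      exact hv
    · intro hx
      refine ⟨h.symm x, ?_, h.apply_symm_apply x⟩
      rw [Set.mem_setOf_eq, hQ, ← hhe, h.apply_symm_apply]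
      exact hx
  have hQw₀ : 0 < myB p (e v₀) (e v₀) := by rw [← hQ]; exact hv₀
  set ε : ℝ := if 0 < (e v₀) 0 then 1 else -1 with hεdef
  have hε : ε = 1 ∨ ε = -1 := by
    rw [hεdef]; split <;> simp
  have habs : ε * (e v₀) 0 = |(e v₀) 0| := by
    rw [hεdef]; split
    · rename_i hpos
      rw [one_mul, abs_of_pos hpos]
    · rename_i hneg
      push_neg at hneg
      rw [neg_one_mul, abs_of_nonpos hneg]
  have hw₀C : ‖e v₀‖ < Real.sqrt 2 * (ε * (e v₀) 0) := by
    rw [habs]; exact (myB_pos_iff (e v₀)).mp hQw₀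
  have hKmem : ∀ i, ‖e (lam i)‖ ≤ Real.sqrt 2 * (ε * (e (lam i)) 0) := by
    intro i
    apply cone_closure ε hε (e v₀) hw₀C
    have h1 := Set.mem_image_of_mem h (hlam i)
    rw [h.image_closure, h.image_connectedComponentIn (show v₀ ∈ {v : V | 0 < Q v} from hv₀),
      hSimg] at h1
    exact h1
  have hpairpos : ∀ i j, i ≠ j → 0 < myB p (e (lam i)) (e (lam j)) := by
    intro i j hij
    apply myB_pos ε hε (hKmem i) (hKmem j)
    intro a b hab
    have hab' : a • lam i + b • lam j = 0 := by
      apply e.injective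
      rw [map_add, map_smul, map_smul, map_zero]
      exact hab
    set g : Fin (m + 2) → ℝ := fun k => if k = i then a else if k = j then b else 0 with hg
    have hsum : ∑ k, g k • lam k = a • lam i + b • lam j := by
      have hterm : ∀ k, g k • lam k
          = (if k = i then a • lam k else 0) + (if k = j then b • lam k else 0) := by
        intro k
        by_cases h1 : k = i
        · subst h1
          simp [hg, hij]
        · by_cases h2 : k = j
          · subst h2
            simp [hg, h1]
          · simp [hg, h1, h2]
      rw [Finset.sum_congr rfl fun k _ => hterm k, Finset.sum_add_distrib,
        Finset.sum_ite_eq' Finset.univ i, Finset.sum_ite_eq' Finset.univ j]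
      simp
    have hz := Fintype.linearIndependent_iff.mp hindep g (by rw [hsum, hab'])
    constructor
    · have h1 := hz i
      simpa [hg] using h1
    · have h1 := hz j
      simpa [hg, if_neg (Ne.symm hij)] using h1
  have hBnn : ∀ i j, 0 ≤ myB p (e (lam i)) (e (lam j)) :=
    fun i j => myB_nonneg ε hε (hKmem i) (hKmem j)
  have hexp : ∀ t : Fin (m + 2) → ℝ,
      Q (∑ i, t i • lam i) = ∑ i, ∑ j, t i * t j * myB p (e (lam i)) (e (lam j)) := by
    intro t
    rw [hQ]
    have hes : e (∑ i, t i • lam i) = ∑ i, t i • e (lam i) := by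
      rw [map_sum]
      simp only [map_smul]
    rw [hes]
    simp only [map_sum, map_smul, LinearMap.sum_apply, LinearMap.smul_apply, smul_eq_mul,
      Finset.mul_sum]
    apply Finset.sum_congr rfl
    intro i _
    apply Finset.sum_congr rfl
    intro j _
    rw [myB_comm (e (lam j)) (e (lam i)), mul_assoc]
  have hone : (1 : Fin (m + 2)) ∈ Finset.univ.erase (0 : Fin (m + 2)) :=
    Finset.mem_erase.mpr ⟨one_ne_zero, Finset.mem_univ _⟩
  set ner : Finset (Fin (m + 2)) := Finset.univ.erase 0 with hner
  set b : ℝ := ner.inf' ⟨1, hone⟩ (fun j => myB p (e (lam 0)) (e (lam j))) with hbdef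
  have hbpos : 0 < b := by
    rw [hbdef]
    refine (Finset.lt_inf'_iff _).2 ?_
    intro j hj
    exact hpairpos 0 j (Ne.symm (Finset.mem_erase.mp hj).1)
  have hble : ∀ j ∈ ner, b ≤ myB p (e (lam 0)) (e (lam j)) :=
    fun j hj => Finset.inf'_le _ hj
  refine ⟨b, hbpos, ?_⟩
  intro r hr
  set s : Fin (m + 2) → ℝ := fun i => |Real.log (r i)| with hsdef
  have hlogneg : ∀ i, Real.log (r i) < 0 := fun i =>
    Real.log_neg (hr i).1 (lt_of_le_of_lt (hr i).2 hR1)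
  have hspos : ∀ i, 0 < s i := fun i => abs_pos.mpr (ne_of_lt (hlogneg i))
  have hlog : ∀ i, Real.log (r i) = -(s i) := fun i => by
    rw [hsdef]
    simp [abs_of_neg (hlogneg i)]
  have hRHS : Q (∑ i, Real.log (r i) • lam i)
      = ∑ i, ∑ j, s i * s j * myB p (e (lam i)) (e (lam j)) := by
    rw [hexp fun i => Real.log (r i)]
    apply Finset.sum_congr rfl
    intro i _
    apply Finset.sum_congr rfl
    intro j _
    rw [hlog i, hlog j]
    ring
  rw [hRHS]
  have hterm_nn : ∀ i j, 0 ≤ s i * s j * myB p (e (lam i)) (e (lam j)) := by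
    intro i j
    have h1 := hBnn i j
    have h2 := (hspos i).le
    have h3 := (hspos j).le
    positivity
  have hstep1 : ∑ j ∈ ner, s 0 * s j * myB p (e (lam 0)) (e (lam j))
      ≤ ∑ i, ∑ j, s i * s j * myB p (e (lam i)) (e (lam j)) :=
    calc ∑ j ∈ ner, s 0 * s j * myB p (e (lam 0)) (e (lam j))
        ≤ ∑ j, s 0 * s j * myB p (e (lam 0)) (e (lam j)) :=
          Finset.sum_le_sum_of_subset_of_nonneg (Finset.subset_univ ner)
            (fun j _ _ => hterm_nn 0 j)
      _ ≤ ∑ i, ∑ j, s i * s j * myB p (e (lam i)) (e (lam j)) :=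
          Finset.single_le_sum
            (f := fun i => ∑ j, s i * s j * myB p (e (lam i)) (e (lam j)))
            (fun i _ => Finset.sum_nonneg fun j _ => hterm_nn i j) (Finset.mem_univ 0)
  have hstep2 : b * s 0 * ∑ j ∈ ner, s j
      ≤ ∑ j ∈ ner, s 0 * s j * myB p (e (lam 0)) (e (lam j)) := by
    rw [Finset.mul_sum]
    apply Finset.sum_le_sum
    intro j hj
    have h1 : b ≤ myB p (e (lam 0)) (e (lam j)) := hble j hj
    have h2 : 0 ≤ s 0 * s j := mul_nonneg (hspos 0).le (hspos j).le
    calc b * s 0 * s j = (s 0 * s j) * b := by ring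
      _ ≤ (s 0 * s j) * myB p (e (lam 0)) (e (lam j)) := mul_le_mul_of_nonneg_left h1 h2
      _ = s 0 * s j * myB p (e (lam 0)) (e (lam j)) := by ring
  have hstep3 : (∏ i ∈ ner, s i) ^ (1 / (m + 1 : ℝ)) ≤ ∑ j ∈ ner, s j := by
    have hcard : ner.card = m + 1 := by
      rw [hner, Finset.card_erase_of_mem (Finset.mem_univ _), Finset.card_univ, Fintype.card_fin]
      omega
    have hwsum : ∑ _j ∈ ner, (1 / (m + 1 : ℝ)) = 1 := by
      rw [Finset.sum_const, hcard, nsmul_eq_mul]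
      push_cast
      field_simp
    have hGM := Real.geom_mean_le_arith_mean_weighted ner (fun _ => 1 / (m + 1 : ℝ)) s
      (fun i _ => by positivity) hwsum (fun i _ => (hspos i).le)
    have hprod : ∏ i ∈ ner, s i ^ (1 / (m + 1 : ℝ)) = (∏ i ∈ ner, s i) ^ (1 / (m + 1 : ℝ)) :=
      Real.finset_prod_rpow ner s (fun i _ => (hspos i).le) _
    rw [hprod] at hGM
    refine hGM.trans (Finset.sum_le_sum fun j _ => ?_)
    have h1 : (1 / (m + 1 : ℝ)) ≤ 1 := by
      rw [div_le_one (by positivity)]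
      norm_num
    calc (1 / (m + 1 : ℝ)) * s j ≤ 1 * s j := mul_le_mul_of_nonneg_right h1 (hspos j).le
      _ = s j := one_mul _
  calc b * |Real.log (r 0)| * (∏ i ∈ univ.erase 0, |Real.log (r i)|) ^ (1 / (m + 1 : ℝ))
      = b * s 0 * (∏ i ∈ ner, s i) ^ (1 / (m + 1 : ℝ)) := by simp only [hsdef, hner]
    _ ≤ b * s 0 * ∑ j ∈ ner, s j :=
        mul_le_mul_of_nonneg_left hstep3 (mul_nonneg hbpos.le (hspos 0).le)
    _ ≤ ∑ j ∈ ner, s 0 * s j * myB p (e (lam 0)) (e (lam j)) := hstep2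
    _ ≤ ∑ i, ∑ j, s i * s j * myB p (e (lam i)) (e (lam j)) := hstep1
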